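/- arXiv:1602.05982 — 5 statements merged into one kernel-verified Lean document; each statement's English description precedes it below -/
import Mathlib

section
/- For every integer K ≥ 2 there exist nonzero real constants c_1,…,c_{K−1}, depending only on K and with c_1 = −K(K+1)/2, such that for all (x,t) ∈ ℝ^{K−1} × ℝ the following are equivalent: (a) ∂^jγ/∂t^j(x,t) = 0 for every j = 1,…,K−1; (b) x_r = c_r·t^{r+1} for every r = 1,…,K−1. (Thus near an A_K point the closure of the set A_{K−1} is the curve parametrized by t ↦ (c_1 t^2, …, c_{K−1} t^K, t).) -/
open Finset

-- iterated derivative formula for the polynomial γ(x, ·)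
lemma gamma_iter (K : ℕ) (x : ℕ → ℝ) (j : ℕ) :
    iteratedDeriv j (fun s : ℝ => s ^ (K + 1) + ∑ i ∈ Finset.Icc 1 (K - 1), x i * s ^ (K - i)) =
    fun t : ℝ => ((K+1).descFactorial j : ℝ) * t ^ (K + 1 - j) +
      ∑ i ∈ Finset.Icc 1 (K - 1), x i * (((K - i).descFactorial j : ℝ) * t ^ (K - i - j)) := by
  induction j with
  | zero => funext t; simp
  | succ j ih =>
    rw [iteratedDeriv_succ, ih]
    funext t
    have h1 : DifferentiableAt ℝ (fun t : ℝ => ((K+1).descFactorial j : ℝ) * t ^ (K + 1 - j)) t :=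
      (differentiableAt_pow _).const_mul _
    have h2 : ∀ i ∈ Finset.Icc 1 (K-1), DifferentiableAt ℝ
        (fun t : ℝ => x i * (((K - i).descFactorial j : ℝ) * t ^ (K - i - j))) t :=
      fun i _ => ((differentiableAt_pow _).const_mul _).const_mul _
    rw [deriv_fun_add h1 (DifferentiableAt.fun_sum h2), deriv_const_mul _ (differentiableAt_pow _),
      deriv_pow_field, deriv_fun_sum h2]
    congr 1
    · have : K + 1 - j - 1 = K + 1 - (j+1) := by omega
      rw [this, Nat.descFactorial_succ]
      push_cast
      ring
    · refine Finset.sum_congr rfl fun i _ => ?_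
      rw [deriv_const_mul _ (((differentiableAt_pow _)).const_mul _),
        deriv_const_mul _ (differentiableAt_pow _), deriv_pow_field]
      have : K - i - j - 1 = K - i - (j+1) := by omega
      rw [this, Nat.descFactorial_succ]
      push_cast
      ring

lemma cast_df {n k : ℕ} (h : k ≤ n) :
    (n.descFactorial k : ℝ) = (Nat.factorial n : ℝ) / (Nat.factorial (n - k) : ℝ) := by
  rw [eq_div_iff (by exact_mod_cast (n-k).factorial_ne_zero)]
  exact_mod_cast (mul_comm (Nat.factorial (n-k)) _ ▸ Nat.factorial_mul_descFactorial h)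

lemma alt_sum (n : ℕ) (hn : n ≠ 0) : ∑ i ∈ range (n+1), (-1:ℝ)^i * n.choose i = 0 := by
  have h := Int.alternating_sum_range_choose_of_ne hn
  have : ((∑ i ∈ range (n+1), (-1:ℤ)^i * n.choose i : ℤ) : ℝ)
      = ∑ i ∈ range (n+1), (-1:ℝ)^i * n.choose i := by push_cast; rfl
  rw [← this, h]; norm_num

lemma alt_sum_mul (n : ℕ) (hn : 2 ≤ n) :
    ∑ j ∈ range (n+1), (-1:ℝ)^j * j * n.choose j = 0 := by
  obtain ⟨m, rfl⟩ : ∃ m, n = m + 1 := ⟨n - 1, by omega⟩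
  rw [Finset.sum_range_succ']
  have hterm : ∀ i : ℕ, (-1:ℝ)^(i+1) * ((i+1 : ℕ) : ℝ) * ((m+1).choose (i+1) : ℝ)
      = -((((m:ℝ)+1)) * ((-1:ℝ)^i * (m.choose i : ℝ))) := by
    intro i
    have h'' : (((i:ℝ))+1) * ((m+1).choose (i+1) : ℝ) = ((m:ℝ)+1) * (m.choose i : ℝ) := by
      have h := congrArg (Nat.cast (R := ℝ)) (Nat.add_one_mul_choose_eq m i)
      push_cast at h
      linarith
    rw [pow_succ]
    push_cast
    linear_combination ((-1:ℝ)^i * (-1)) * h''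
  rw [Finset.sum_congr rfl (fun i _ => hterm i)]
  rw [Finset.sum_neg_distrib, ← Finset.mul_sum, alt_sum m (by omega)]
  norm_num

lemma keyL (r : ℕ) (hr : 1 ≤ r) :
    ∑ i ∈ Icc 1 r, (-1:ℝ)^i * (i : ℝ) * ((r+1).choose (i+1) : ℝ) = -1 := by
  have h0 : ∑ i ∈ range (r+1), (-1:ℝ)^i * (i : ℝ) * ((r+1).choose (i+1) : ℝ)
      = ∑ i ∈ Icc 1 r, (-1:ℝ)^i * (i : ℝ) * ((r+1).choose (i+1) : ℝ) := by
    rw [range_eq_Ico, ← Finset.Ico_add_one_right_eq_Icc,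
      Finset.sum_eq_sum_Ico_succ_bot (by omega : 0 < r + 1)]
    norm_num
  have hT : ∑ j ∈ range (r+2), (-1:ℝ)^j * ((j:ℝ) - 1) * ((r+1).choose j : ℝ) = 0 := by
    have h1 := alt_sum_mul (r+1) (by omega)
    have h2 := alt_sum (r+1) (by omega)
    calc ∑ j ∈ range (r+2), (-1:ℝ)^j * ((j:ℝ) - 1) * ((r+1).choose j : ℝ)
        = ∑ j ∈ range (r+2), ((-1:ℝ)^j * (j:ℝ) * ((r+1).choose j : ℝ)
            - (-1:ℝ)^j * ((r+1).choose j : ℝ)) := by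
          exact Finset.sum_congr rfl fun j _ => by ring
      _ = 0 := by rw [Finset.sum_sub_distrib, h1, h2]; ring
  rw [Finset.sum_range_succ'] at hT
  have hterm : ∀ i : ℕ, (-1:ℝ)^(i+1) * (((i+1:ℕ):ℝ) - 1) * ((r+1).choose (i+1) : ℝ)
      = -((-1:ℝ)^i * (i : ℝ) * ((r+1).choose (i+1) : ℝ)) := by
    intro i; rw [pow_succ]; push_cast; ring
  rw [Finset.sum_congr rfl (fun i _ => hterm i), Finset.sum_neg_distrib, h0] at hT
  simp at hT
  linarith

lemma keyN {K i r : ℕ} (hi1 : 1 ≤ i) (hir : i ≤ r) (hrK : r ≤ K - 1) (hK : 2 ≤ K) :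
    ((K+1).choose (i+1) : ℝ) * ((K - i).descFactorial (K - r) : ℝ)
      = ((r+1).choose (i+1) : ℝ) * ((K+1).descFactorial (K - r) : ℝ) := by
  have e1 : K + 1 - (i + 1) = K - i := by omega
  have e2 : K - i - (K - r) = r - i := by omega
  have e3 : K + 1 - (K - r) = r + 1 := by omega
  have e4 : r + 1 - (i + 1) = r - i := by omega
  rw [Nat.cast_choose ℝ (by omega : i + 1 ≤ K + 1), Nat.cast_choose ℝ (by omega : i + 1 ≤ r + 1),
    cast_df (by omega : K - r ≤ K - i), cast_df (by omega : K - r ≤ K + 1), e1, e2, e3, e4]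
  have f1 : (Nat.factorial (i+1) : ℝ) ≠ 0 := by exact_mod_cast (i+1).factorial_ne_zero
  have f2 : (Nat.factorial (K-i) : ℝ) ≠ 0 := by exact_mod_cast (K-i).factorial_ne_zero
  have f3 : (Nat.factorial (r-i) : ℝ) ≠ 0 := by exact_mod_cast (r-i).factorial_ne_zero
  have f4 : (Nat.factorial (r+1) : ℝ) ≠ 0 := by exact_mod_cast (r+1).factorial_ne_zero
  field_simp

lemma keyE {K r : ℕ} (hK : 2 ≤ K) (hr1 : 1 ≤ r) (hrK : r ≤ K - 1) :
    ((K+1).descFactorial (K - r) : ℝ)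
      + ∑ i ∈ Icc 1 r, ((-1:ℝ)^i * (i:ℝ) * ((K+1).choose (i+1) : ℝ))
          * ((K - i).descFactorial (K - r) : ℝ) = 0 := by
  have step : ∀ i ∈ Icc 1 r,
      ((-1:ℝ)^i * (i:ℝ) * ((K+1).choose (i+1) : ℝ)) * ((K - i).descFactorial (K - r) : ℝ)
        = ((-1:ℝ)^i * (i:ℝ) * ((r+1).choose (i+1) : ℝ)) * ((K+1).descFactorial (K - r) : ℝ) := by
    intro i hi
    rw [Finset.mem_Icc] at hi
    have := keyN (K := K) hi.1 hi.2 hrK hK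
    linear_combination ((-1:ℝ)^i * (i:ℝ)) * this
  rw [Finset.sum_congr rfl step, ← Finset.sum_mul, keyL r hr1]
  ring

/-- For every `K ≥ 2` there exist nonzero constants `c_1, …, c_{K-1}`, with
`c 1 = -K(K+1)/2`, such that the system `∂^j γ/∂t^j (x,t) = 0` for `j = 1, …, K-1`
is equivalent to `x r = c r * t^(r+1)` for `r = 1, …, K-1`, where
`γ(x,t) = t^(K+1) + ∑_{i=1}^{K-1} x i * t^(K-i)`. -/
theorem stmt2 (K : ℕ) (hK : 2 ≤ K) :
    ∃ c : ℕ → ℝ,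
      (∀ r ∈ Finset.Icc 1 (K - 1), c r ≠ 0) ∧
      c 1 = -((K : ℝ) * ((K : ℝ) + 1)) / 2 ∧
      ∀ (x : ℕ → ℝ) (t : ℝ),
        (∀ j ∈ Finset.Icc 1 (K - 1),
            iteratedDeriv j
              (fun s : ℝ => s ^ (K + 1) + ∑ i ∈ Finset.Icc 1 (K - 1), x i * s ^ (K - i)) t = 0)
          ↔ (∀ r ∈ Finset.Icc 1 (K - 1), x r = c r * t ^ (r + 1)) := by
  refine ⟨fun r => (-1:ℝ)^r * (r:ℝ) * ((K+1).choose (r+1) : ℝ), ?_, ?_, ?_⟩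
  · intro r hr
    rw [Finset.mem_Icc] at hr
    have h1 : ((-1:ℝ)^r) ≠ 0 := pow_ne_zero _ (by norm_num)
    have h2 : ((r:ℝ)) ≠ 0 := Nat.cast_ne_zero.mpr (by omega)
    have h3 : (((K+1).choose (r+1) : ℕ) : ℝ) ≠ 0 := by
      have := Nat.choose_pos (show r+1 ≤ K+1 by omega)
      exact_mod_cast this.ne'
    exact mul_ne_zero (mul_ne_zero h1 h2) h3
  · show (-1:ℝ)^1 * ((1:ℕ):ℝ) * (((K+1).choose (1+1) : ℕ) : ℝ) = _
    rw [show (1+1 : ℕ) = 2 from rfl, Nat.cast_choose_two]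
    push_cast
    ring
  · intro x t
    simp only [gamma_iter K x]
    constructor
    · intro H
      have main : ∀ r, 1 ≤ r → r ≤ K - 1 →
          x r = (-1:ℝ)^r * (r:ℝ) * ((K+1).choose (r+1) : ℝ) * t ^ (r + 1) := by
        intro r
        induction r using Nat.strong_induction_on with
        | _ r IH =>
          intro hr1 hrK
          obtain ⟨m, rfl⟩ : ∃ m, r = m + 1 := ⟨r - 1, by omega⟩
          have hj := H (K - (m+1)) (by rw [Finset.mem_Icc]; omega)
          have htr : ∑ i ∈ Icc 1 (K-1),
                x i * (((K-i).descFactorial (K-(m+1)) : ℝ) * t ^ (K-i-(K-(m+1))))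
              = ∑ i ∈ Icc 1 (m+1),
                x i * (((K-i).descFactorial (K-(m+1)) : ℝ) * t ^ (K-i-(K-(m+1)))) := by
            refine (Finset.sum_subset (Finset.Icc_subset_Icc_right (by omega)) ?_).symm
            intro i hiK hi
            rw [Finset.mem_Icc] at hiK
            rw [Finset.mem_Icc] at hi
            have hz : (K - i).descFactorial (K - (m+1)) = 0 :=
              Nat.descFactorial_eq_zero_iff_lt.mpr (by omega)
            rw [hz]; push_cast; ring
          rw [htr, Finset.sum_Icc_succ_top (by omega : 1 ≤ m + 1), Nat.sub_self,
            Nat.descFactorial_self, pow_zero,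
            show K + 1 - (K - (m+1)) = m + 1 + 1 from by omega] at hj
          have hsum : ∑ i ∈ Icc 1 m,
                x i * (((K-i).descFactorial (K-(m+1)) : ℝ) * t ^ (K-i-(K-(m+1))))
              = (∑ i ∈ Icc 1 m, ((-1:ℝ)^i * (i:ℝ) * ((K+1).choose (i+1) : ℝ))
                  * ((K-i).descFactorial (K-(m+1)) : ℝ)) * t ^ (m+1+1) := by
            rw [Finset.sum_mul]
            refine Finset.sum_congr rfl fun i hi => ?_
            rw [Finset.mem_Icc] at hi
            rw [IH i (by omega) (by omega) (by omega),
              show K - i - (K-(m+1)) = m + 1 - i from by omega]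
            have ht : t^(i+1) * t^(m+1-i) = t^(m+1+1) := by
              rw [← pow_add]; congr 1; omega
            linear_combination ((-1:ℝ)^i * (i:ℝ) * ((K+1).choose (i+1) : ℝ)
              * ((K-i).descFactorial (K-(m+1)) : ℝ)) * ht
          rw [hsum] at hj
          have hE := keyE (K := K) hK (show 1 ≤ m+1 by omega) (show m+1 ≤ K-1 by omega)
          rw [Finset.sum_Icc_succ_top (by omega : 1 ≤ m + 1), Nat.descFactorial_self] at hE
          have hf : ((Nat.factorial (K-(m+1)) : ℕ) : ℝ) ≠ 0 := by
            exact_mod_cast (K-(m+1)).factorial_ne_zero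
          refine mul_right_cancel₀ hf ?_
          linear_combination hj - t^(m+1+1) * hE
      intro r hr
      rw [Finset.mem_Icc] at hr
      exact main r hr.1 hr.2
    · intro H j hjmem
      rw [Finset.mem_Icc] at hjmem
      obtain ⟨m, hmK, hjm⟩ : ∃ m, m + 1 ≤ K - 1 ∧ j = K - (m+1) := ⟨K - j - 1, by omega, by omega⟩
      subst hjm
      have htr : ∑ i ∈ Icc 1 (K-1),
            x i * (((K-i).descFactorial (K-(m+1)) : ℝ) * t ^ (K-i-(K-(m+1))))
          = ∑ i ∈ Icc 1 (m+1),
            x i * (((K-i).descFactorial (K-(m+1)) : ℝ) * t ^ (K-i-(K-(m+1)))) := by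
        refine (Finset.sum_subset (Finset.Icc_subset_Icc_right (by omega)) ?_).symm
        intro i hiK hi
        rw [Finset.mem_Icc] at hiK
        rw [Finset.mem_Icc] at hi
        have hz : (K - i).descFactorial (K - (m+1)) = 0 :=
          Nat.descFactorial_eq_zero_iff_lt.mpr (by omega)
        rw [hz]; push_cast; ring
      have hsum : ∑ i ∈ Icc 1 (m+1),
            x i * (((K-i).descFactorial (K-(m+1)) : ℝ) * t ^ (K-i-(K-(m+1))))
          = (∑ i ∈ Icc 1 (m+1), ((-1:ℝ)^i * (i:ℝ) * ((K+1).choose (i+1) : ℝ))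
              * ((K-i).descFactorial (K-(m+1)) : ℝ)) * t ^ (m+1+1) := by
        rw [Finset.sum_mul]
        refine Finset.sum_congr rfl fun i hi => ?_
        rw [Finset.mem_Icc] at hi
        rw [H i (by rw [Finset.mem_Icc]; omega),
          show K - i - (K-(m+1)) = m + 1 - i from by omega]
        have ht : t^(i+1) * t^(m+1-i) = t^(m+1+1) := by
          rw [← pow_add]; congr 1; omega
        linear_combination ((-1:ℝ)^i * (i:ℝ) * ((K+1).choose (i+1) : ℝ)
          * ((K-i).descFactorial (K-(m+1)) : ℝ)) * ht
      rw [htr, hsum, show K + 1 - (K - (m+1)) = m + 1 + 1 from by omega]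
      have hE := keyE (K := K) hK (show 1 ≤ m+1 by omega) (show m+1 ≤ K-1 by omega)
      linear_combination t^(m+1+1) * hE
end

section
/- For every integer K ≥ 2, letting c_1,…,c_{K−1} be the unique real constants such that the system {∂^jγ/∂t^j(x,t) = 0, j = 1,…,K−1} is equivalent to {x_r = c_r·t^{r+1}, r = 1,…,K−1}, there exists a nonzero real constant C, depending only on K, such that γ(c_1 t^2, c_2 t^3, …, c_{K−1} t^K, t) = C·t^{K+1} for all t ∈ ℝ. (In particular, along the closure of A_{K−1} near an A_K point, the last component of the normal form equals a nonzero constant times t^{K+1}.) -/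
open Polynomial in
lemma iteratedDeriv_polyEval (p : Polynomial ℝ) (n : ℕ) :
    iteratedDeriv n (fun s : ℝ => p.eval s) = fun s => (derivative^[n] p).eval s := by
  induction n with
  | zero => simp
  | succ n ih =>
    rw [iteratedDeriv_succ, ih, Function.iterate_succ_apply']
    funext s
    exact Polynomial.deriv _

open Polynomial in
/-- For `K ≥ 2`, if `c_1, …, c_{K-1}` are constants such that the system
`∂^j γ/∂t^j (x,t) = 0` for `j = 1, …, K-1` is equivalent to `x r = c r * t^(r+1)`
for `r = 1, …, K-1`, then there is a nonzero constant `C` with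
`γ(c_1 t^2, …, c_{K-1} t^K, t) = C * t^(K+1)` for all `t`, where
`γ(x,t) = t^(K+1) + ∑_{i=1}^{K-1} x i * t^(K-i)`. -/
theorem stmt3 (K : ℕ) (hK : 2 ≤ K) (c : ℕ → ℝ)
    (hc : ∀ (x : ℕ → ℝ) (t : ℝ),
        (∀ j ∈ Finset.Icc 1 (K - 1),
            iteratedDeriv j
              (fun s : ℝ => s ^ (K + 1) + ∑ i ∈ Finset.Icc 1 (K - 1), x i * s ^ (K - i)) t = 0)
          ↔ (∀ r ∈ Finset.Icc 1 (K - 1), x r = c r * t ^ (r + 1))) :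
    ∃ C : ℝ, C ≠ 0 ∧ ∀ t : ℝ,
      t ^ (K + 1) + ∑ i ∈ Finset.Icc 1 (K - 1), (c i * t ^ (i + 1)) * t ^ (K - i)
        = C * t ^ (K + 1) := by
  refine ⟨1 + ∑ i ∈ Finset.Icc 1 (K - 1), c i, ?_, ?_⟩
  · -- nonzero
    intro h0
    set P : Polynomial ℝ := X ^ (K + 1) + ∑ i ∈ Finset.Icc 1 (K - 1), C (c i) * X ^ (K - i)
      with hP
    have hevalP : ∀ s : ℝ, P.eval s
        = s ^ (K + 1) + ∑ i ∈ Finset.Icc 1 (K - 1), c i * s ^ (K - i) := by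
      intro s; simp [hP, eval_finset_sum]
    have hdegsum : (∑ i ∈ Finset.Icc 1 (K - 1), C (c i) * X ^ (K - i)).degree
        < ((K + 1 : ℕ) : WithBot ℕ) := by
      refine lt_of_le_of_lt (Polynomial.degree_sum_le _ _) ?_
      rw [Finset.sup_lt_iff (by exact_mod_cast WithBot.bot_lt_coe (K + 1))]
      intro i hi
      refine lt_of_le_of_lt (degree_C_mul_X_pow_le _ _) ?_
      exact_mod_cast Nat.lt_succ_of_le (Nat.sub_le _ _)
    have hPmonic : P.Monic := by
      rw [hP]; exact monic_X_pow_add hdegsum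
    have hPdeg : P.natDegree = K + 1 := by
      rw [hP, natDegree_add_eq_left_of_degree_lt (by rwa [degree_X_pow]), natDegree_X_pow]
    have hPne : P ≠ 0 := hPmonic.ne_zero
    have hder := (hc c 1).mpr (fun r hr => by simp)
    have hroot : ∀ m ≤ K - 1, (derivative^[m] P).IsRoot 1 := by
      intro m hm
      rcases Nat.eq_zero_or_pos m with h | h
      · subst h
        simp only [Function.iterate_zero, id_eq, IsRoot.def, hevalP]
        simpa using h0
      · have h2 := hder m (Finset.mem_Icc.mpr ⟨h, hm⟩)
        rw [show (fun s : ℝ => s ^ (K + 1) + ∑ i ∈ Finset.Icc 1 (K - 1), c i * s ^ (K - i))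
              = fun s => P.eval s from funext fun s => (hevalP s).symm,
          iteratedDeriv_polyEval] at h2
        exact h2
    have hmult : K - 1 < P.rootMultiplicity 1 :=
      lt_rootMultiplicity_of_isRoot_iterate_derivative_of_mem_nonZeroDivisors hPne hroot
        (mem_nonZeroDivisors_of_ne_zero (by positivity))
    have hdvd1 : (X - Polynomial.C 1) ^ K ∣ P :=
      dvd_trans (pow_dvd_pow _ (by omega)) (P.pow_rootMultiplicity_dvd 1)
    have hdvd0 : X ∣ P := by
      have h3 : P.eval 0 = 0 := by
        rw [hevalP, zero_pow (by omega), Finset.sum_eq_zero, add_zero]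
        intro i hi
        rw [Finset.mem_Icc] at hi
        rw [zero_pow (by omega), mul_zero]
      simpa using (dvd_iff_isRoot.mpr (by simpa [IsRoot.def] using h3) :
        X - Polynomial.C (0:ℝ) ∣ P)
    have hcop : IsCoprime (X : Polynomial ℝ) ((X - Polynomial.C 1) ^ K) := by
      refine IsCoprime.pow_right ?_
      have h4 : IsCoprime (X - Polynomial.C (0:ℝ)) (X - Polynomial.C 1) :=
        isCoprime_X_sub_C_of_isUnit_sub (by norm_num)
      simpa using h4
    have hdvd : X * (X - Polynomial.C 1) ^ K ∣ P := hcop.mul_dvd hdvd0 hdvd1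
    have hQmonic : (X * (X - Polynomial.C 1) ^ K : Polynomial ℝ).Monic :=
      monic_X.mul ((monic_X_sub_C 1).pow K)
    have hQdeg : (X * (X - Polynomial.C 1) ^ K : Polynomial ℝ).natDegree = K + 1 := by
      rw [natDegree_mul X_ne_zero (pow_ne_zero _ (X_sub_C_ne_zero 1)), natDegree_X,
        natDegree_pow, natDegree_X_sub_C, mul_one, add_comm]
    have hPeq : P = X * (X - Polynomial.C 1) ^ K :=
      eq_of_monic_of_dvd_of_natDegree_le hQmonic hPmonic hdvd (by rw [hPdeg, hQdeg])
    have hcoeffP : P.coeff K = 0 := by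
      rw [hP, coeff_add, coeff_X_pow, if_neg (by omega), zero_add, finset_sum_coeff]
      refine Finset.sum_eq_zero fun i hi => ?_
      rw [Finset.mem_Icc] at hi
      rw [coeff_C_mul, coeff_X_pow, if_neg (by omega), mul_zero]
    have hcoeffQ : (X * (X - Polynomial.C 1) ^ K : Polynomial ℝ).coeff K = -K := by
      obtain ⟨K', rfl⟩ : ∃ K', K = K' + 1 := ⟨K - 1, by omega⟩
      rw [coeff_X_mul, show (X - Polynomial.C (1:ℝ)) = X + Polynomial.C (-1) from by
        rw [map_neg]; ring, coeff_X_add_C_pow]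
      simp [Nat.choose_succ_self_right]
    rw [hPeq, hcoeffQ] at hcoeffP
    have hKne : (K : ℝ) ≠ 0 := Nat.cast_ne_zero.mpr (by omega)
    exact hKne (by linarith)
  · intro t
    have h5 : ∀ i ∈ Finset.Icc 1 (K - 1),
        (c i * t ^ (i + 1)) * t ^ (K - i) = c i * t ^ (K + 1) := by
      intro i hi
      rw [Finset.mem_Icc] at hi
      rw [mul_assoc, ← pow_add]
      congr 2
      omega
    rw [Finset.sum_congr rfl h5, ← Finset.sum_mul]
    ring
end

section
/- For every integer K ≥ 3 there exist nonzero real constants α_2,…,α_{K−1} and β_2,…,β_{K−1}, depending only on K, such that for all (x,t) ∈ ℝ^{K−1} × ℝ the following are equivalent: (a) ∂^jγ/∂t^j(x,t) = 0 for every j = 1,…,K−2; (b) x_r = α_r·t^{r+1} + β_r·x_1·t^{r−1} for every r = 2,…,K−1. (Thus near an A_K point the closure of the set A_{K−2} is the surface parametrized by the two free variables x_1 and t.) -/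
open Finset Polynomial

namespace Stmt4Aux

def A (K i : ℕ) : ℤ :=
  (-1)^(i+1) * (((K+1).choose (i+1) : ℤ) + ((K+1).choose 2 : ℤ) * ((K-1).choose (i-1) : ℤ)
    - ((K:ℤ)+1) * (K.choose i : ℤ))

def B (K i : ℕ) : ℤ := (-1)^(i+1) * ((K-1).choose (i-1) : ℤ)

lemma chu (a n : ℕ) (h1 : 1 ≤ n) (h2 : n ≤ a) :
    ∑ m ∈ Finset.range (n+1), (-1:ℤ)^m * (a.choose m) * ((a-m).choose (n-m)) = 0 := by
  have hterm : ∀ m ∈ Finset.range (n+1),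
      (-1:ℤ)^m * (a.choose m) * ((a-m).choose (n-m))
        = (a.choose n : ℤ) * ((-1)^m * (n.choose m : ℤ)) := by
    intro m hm
    have hm' : m ≤ n := Finset.mem_range_succ_iff.mp hm
    have h := Nat.choose_mul (n := a) hm'
    have h' : ((a.choose n : ℤ)) * (n.choose m : ℤ)
        = (a.choose m : ℤ) * ((a-m).choose (n-m) : ℤ) := by
      exact_mod_cast congrArg (Nat.cast : ℕ → ℤ) h
    linear_combination (-(-1:ℤ)^m) * h'
  rw [Finset.sum_congr rfl hterm, ← Finset.mul_sum]
  rw [Int.alternating_sum_range_choose]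
  simp [Nat.one_le_iff_ne_zero.mp h1]

lemma IbetaC (K r : ℕ) (hr2 : 2 ≤ r) (hrK : r ≤ K-1) :
    ∑ i ∈ Finset.Icc 1 r, B K i * ((K-i).choose (r-i) : ℤ) = 0 := by
  rw [← Finset.Ico_add_one_right_eq_Icc, Finset.sum_Ico_eq_sum_range]
  have h2 : r + 1 - 1 = (r-1) + 1 := by omega
  rw [h2]
  have hterm : ∀ m ∈ Finset.range ((r-1)+1),
      B K (1+m) * (((K-(1+m)).choose (r-(1+m)) : ℕ) : ℤ)
        = (-1:ℤ)^m * (((K-1).choose m : ℕ) : ℤ) * ((((K-1)-m).choose ((r-1)-m) : ℕ) : ℤ) := by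
    intro m hm
    have hm' : m ≤ r - 1 := Finset.mem_range_succ_iff.mp hm
    have e1 : K - (1+m) = K - 1 - m := by omega
    have e2 : (1+m) - 1 = m := by omega
    have e3 : r - (1+m) = r - 1 - m := by omega
    rw [B, e1, e2, e3]
    ring
  rw [Finset.sum_congr rfl hterm]
  exact chu (K-1) (r-1) (by omega) (by omega)

lemma IalphaC (K r : ℕ) (hK : 3 ≤ K) (hr2 : 2 ≤ r) (hrK : r ≤ K-1) :
    ((K+1).choose (r+1) : ℤ) + ∑ i ∈ Finset.Icc 1 r, A K i * ((K-i).choose (r-i) : ℤ) = 0 := by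
  have hT1 : ∑ m ∈ Finset.range ((r+1)+1),
      (-1:ℤ)^m * ((K+1).choose m) * ((K+1-m).choose (r+1-m)) = 0 :=
    chu (K+1) (r+1) (by omega) (by omega)
  have hT2 : ∑ m ∈ Finset.range (r+1),
      (-1:ℤ)^m * (K.choose m) * ((K-m).choose (r-m)) = 0 :=
    chu K r (by omega) (by omega)
  have hT3 : ∑ m ∈ Finset.range r,
      (-1:ℤ)^m * ((K-1).choose m) * ((K-1-m).choose (r-1-m)) = 0 := by
    have h := chu (K-1) (r-1) (by omega) (by omega)
    have hr : (r-1)+1 = r := by omega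
    rwa [hr] at h
  rw [Finset.sum_range_succ', Finset.sum_range_succ'] at hT1
  rw [Finset.sum_range_succ'] at hT2
  simp only [zero_add, pow_zero, pow_one, Nat.sub_zero, Nat.add_sub_cancel,
    Nat.choose_zero_right, Nat.choose_one_right, Nat.cast_one, one_mul] at hT1 hT2
  push_cast at hT1 hT2
  have hsplit : ∑ i ∈ Finset.Icc 1 r, A K i * ((K-i).choose (r-i) : ℤ)
      = (∑ m ∈ Finset.range r,
          (-1:ℤ)^(m+1+1) * ((K+1).choose (m+1+1)) * ((K-(m+1)).choose (r-(m+1))))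
        + ((K:ℤ)+1) * (∑ m ∈ Finset.range r,
          (-1:ℤ)^(m+1) * (K.choose (m+1)) * ((K-(m+1)).choose (r-(m+1))))
        + ((K+1).choose 2 : ℤ) * (∑ m ∈ Finset.range r,
          (-1:ℤ)^m * ((K-1).choose m) * ((K-1-m).choose (r-1-m))) := by
    rw [← Finset.Ico_add_one_right_eq_Icc, Finset.sum_Ico_eq_sum_range]
    have h2 : r + 1 - 1 = r := by omega
    rw [h2, Finset.mul_sum, Finset.mul_sum, ← Finset.sum_add_distrib, ← Finset.sum_add_distrib]
    apply Finset.sum_congr rfl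
    intro m hm
    have hm' : m < r := Finset.mem_range.mp hm
    have e1 : K - (1+m) = K - 1 - m := by omega
    have e2 : (1+m) - 1 = m := by omega
    have e3 : r - (1+m) = r - 1 - m := by omega
    have e4 : (1+m) + 1 = m + 1 + 1 := by omega
    have e7 : K - (m+1) = K - 1 - m := by omega
    have e8 : r - (m+1) = r - 1 - m := by omega
    have e9 : K.choose (1+m) = K.choose (m+1) := by rw [Nat.add_comm]
    rw [A, e1, e2, e3, e4, e7, e8, e9]
    push_cast
    ring
  rw [hsplit]
  linear_combination hT1 + ((K:ℤ)+1) * hT2 + ((K+1).choose 2 : ℤ) * hT3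

lemma A_one (K : ℕ) (hK : 3 ≤ K) : A K 1 = 0 := by
  have h3 := Nat.add_one_mul_choose_eq K 1
  simp only [Nat.choose_one_right, Nat.succ_eq_add_one] at h3
  have h3' : ((K:ℤ)+1) * K = ((K+1).choose 2) * 2 := by exact_mod_cast h3
  simp only [A, Nat.sub_self, Nat.choose_zero_right, Nat.choose_one_right]
  norm_num
  linear_combination (-1:ℤ)*h3'

lemma B_one (K : ℕ) : B K 1 = 1 := by simp [B]

lemma B_ne_zero (K r : ℕ) (hK : 3 ≤ K) (hr2 : 2 ≤ r) (hrK : r ≤ K-1) : B K r ≠ 0 := by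
  unfold B
  apply mul_ne_zero (pow_ne_zero _ (by norm_num))
  exact_mod_cast (Nat.choose_pos (by omega : r - 1 ≤ K - 1)).ne'

lemma A_ne_zero (K r : ℕ) (hK : 3 ≤ K) (hr2 : 2 ≤ r) (hrK : r ≤ K-1) : A K r ≠ 0 := by
  have hc : (0:ℤ) < ((K-1).choose (r-1) : ℤ) := by
    exact_mod_cast Nat.choose_pos (by omega : r - 1 ≤ K - 1)
  have f1 : (K:ℤ) * ((K-1).choose (r-1)) = (K.choose r) * r := by
    have h := Nat.add_one_mul_choose_eq (K-1) (r-1)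
    have e1 : K - 1 + 1 = K := by omega
    have e2 : r - 1 + 1 = r := by omega
    rw [e1, e2] at h; exact_mod_cast h
  have f2 : ((K:ℤ)+1) * (K.choose r) = ((K+1).choose (r+1)) * (r+1) := by
    exact_mod_cast Nat.add_one_mul_choose_eq K r
  have f3 : ((K:ℤ)+1) * K = ((K+1).choose 2) * 2 := by
    have h := Nat.add_one_mul_choose_eq K 1
    simp only [Nat.choose_one_right, Nat.succ_eq_add_one] at h
    exact_mod_cast h
  have hE : 2*(r:ℤ)*(r+1) * (((K+1).choose (r+1) : ℤ)
        + ((K+1).choose 2 : ℤ)*((K-1).choose (r-1)) - ((K:ℤ)+1)*(K.choose r))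
      = (K:ℤ)*((K:ℤ)+1)*((K-1).choose (r-1))*r*(r-1) := by
    linear_combination (2*(r:ℤ)*((K:ℤ)+1))*f1 + (-2*(r:ℤ))*f2
      + (-(r:ℤ)*((r:ℤ)+1)*((K-1).choose (r-1) : ℤ))*f3
  have hrpos : (0:ℤ) < (r:ℤ) := by exact_mod_cast (by omega : 0 < r)
  have hrm1 : (1:ℤ) ≤ (r:ℤ) - 1 := by
    have h2r : (2:ℤ) ≤ (r:ℤ) := by exact_mod_cast hr2
    linarith
  have hKpos : (0:ℤ) < (K:ℤ) := by exact_mod_cast (by omega : 0 < K)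
  have p1 : (0:ℤ) < (K:ℤ)*((K:ℤ)+1) := by nlinarith
  have p2 : (0:ℤ) < (K:ℤ)*((K:ℤ)+1)*((K-1).choose (r-1)) := mul_pos p1 hc
  have p3 : (0:ℤ) < (K:ℤ)*((K:ℤ)+1)*((K-1).choose (r-1))*r := mul_pos p2 hrpos
  have p4 : (0:ℤ) < (K:ℤ)*((K:ℤ)+1)*((K-1).choose (r-1))*r*((r:ℤ)-1) :=
    mul_pos p3 (by linarith)
  have hEpos : (0:ℤ) < ((K+1).choose (r+1) : ℤ)
      + ((K+1).choose 2 : ℤ)*((K-1).choose (r-1)) - ((K:ℤ)+1)*(K.choose r) := by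
    by_contra h0
    push_neg at h0
    nlinarith [hE, p4, mul_nonneg (by nlinarith : (0:ℤ) ≤ 2*(r:ℤ)*((r:ℤ)+1)) (neg_nonneg.mpr h0)]
  unfold A
  exact mul_ne_zero (pow_ne_zero _ (by norm_num)) (by linarith)

lemma Ibeta_real (K r : ℕ) (hK : 3 ≤ K) (hr2 : 2 ≤ r) (hrK : r ≤ K-1) :
    ∑ i ∈ Finset.Icc 1 r, ((B K i : ℝ)) * ((K-i).descFactorial (K-r) : ℝ) = 0 := by
  have hcast : ∑ i ∈ Finset.Icc 1 r, ((B K i : ℝ)) * ((K-i).choose (r-i) : ℝ) = 0 := by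
    exact_mod_cast congrArg (Int.cast : ℤ → ℝ) (IbetaC K r hr2 hrK)
  have h : ∀ i ∈ Finset.Icc 1 r, ((B K i : ℝ)) * ((K-i).descFactorial (K-r) : ℝ)
      = ((K-r).factorial : ℝ) * (((B K i : ℝ)) * ((K-i).choose (r-i) : ℝ)) := by
    intro i hi
    rw [Finset.mem_Icc] at hi
    have e : (K-i).descFactorial (K-r) = (K-r).factorial * (K-i).choose (K-r) :=
      Nat.descFactorial_eq_factorial_mul_choose _ _
    have e2 : (K-i).choose (K-r) = (K-i).choose (r-i) := by
      have h' : (K-i) - (r-i) = K - r := by omega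
      rw [← h', Nat.choose_symm (by omega)]
    rw [e, e2]; push_cast; ring
  rw [Finset.sum_congr rfl h, ← Finset.mul_sum, hcast, mul_zero]

lemma Ialpha_real (K r : ℕ) (hK : 3 ≤ K) (hr2 : 2 ≤ r) (hrK : r ≤ K-1) :
    ((K+1).descFactorial (K-r) : ℝ)
      + ∑ i ∈ Finset.Icc 1 r, ((A K i : ℝ)) * ((K-i).descFactorial (K-r) : ℝ) = 0 := by
  have hcast : ((K+1).choose (r+1) : ℝ)
      + ∑ i ∈ Finset.Icc 1 r, ((A K i : ℝ)) * ((K-i).choose (r-i) : ℝ) = 0 := by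
    exact_mod_cast congrArg (Int.cast : ℤ → ℝ) (IalphaC K r hK hr2 hrK)
  have h : ∀ i ∈ Finset.Icc 1 r, ((A K i : ℝ)) * ((K-i).descFactorial (K-r) : ℝ)
      = ((K-r).factorial : ℝ) * (((A K i : ℝ)) * ((K-i).choose (r-i) : ℝ)) := by
    intro i hi
    rw [Finset.mem_Icc] at hi
    have e : (K-i).descFactorial (K-r) = (K-r).factorial * (K-i).choose (K-r) :=
      Nat.descFactorial_eq_factorial_mul_choose _ _
    have e2 : (K-i).choose (K-r) = (K-i).choose (r-i) := by
      have h' : (K-i) - (r-i) = K - r := by omega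
      rw [← h', Nat.choose_symm (by omega)]
    rw [e, e2]; push_cast; ring
  have hlead : (K+1).descFactorial (K-r) = (K-r).factorial * (K+1).choose (r+1) := by
    rw [Nat.descFactorial_eq_factorial_mul_choose]
    congr 1
    have h' : (K+1) - (r+1) = K - r := by omega
    rw [← h', Nat.choose_symm (by omega)]
  rw [Finset.sum_congr rfl h, ← Finset.mul_sum, hlead]
  push_cast
  linear_combination ((K-r).factorial : ℝ) * hcast

lemma iter_deriv_add (k : ℕ) (p q : ℝ[X]) :
    derivative^[k] (p+q) = derivative^[k] p + derivative^[k] q := by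
  induction k generalizing p q with
  | zero => simp
  | succ n ih => simp [Function.iterate_succ_apply, derivative_add, ih]

lemma iteratedDeriv_polyeval (j : ℕ) (p : ℝ[X]) :
    iteratedDeriv j (fun s => p.eval s) = fun t => (derivative^[j] p).eval t := by
  induction j generalizing p with
  | zero => simp [iteratedDeriv_zero]
  | succ n ih =>
    rw [iteratedDeriv_succ']
    have h : deriv (fun s => p.eval s) = fun s => (derivative p).eval s :=
      funext fun s => Polynomial.deriv p
    rw [h, ih]
    simp [Function.iterate_succ_apply]

noncomputable def F (K : ℕ) (x : ℕ → ℝ) (t : ℝ) (j : ℕ) : ℝ :=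
  ((K+1).descFactorial j : ℝ) * t^(K+1-j)
    + ∑ i ∈ Finset.Icc 1 (K-1), x i * ((K-i).descFactorial j : ℝ) * t^(K-i-j)

lemma eq_formula (K : ℕ) (x : ℕ → ℝ) (j : ℕ) (t : ℝ) :
    iteratedDeriv j (fun s : ℝ => s ^ (K+1) + ∑ i ∈ Finset.Icc 1 (K-1), x i * s ^ (K-i)) t
      = F K x t j := by
  have hfun : (fun s : ℝ => s ^ (K+1) + ∑ i ∈ Finset.Icc 1 (K-1), x i * s ^ (K-i))
      = fun s => (X^(K+1) + ∑ i ∈ Finset.Icc 1 (K-1), C (x i) * X^(K-i) : ℝ[X]).eval s := by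
    funext s
    simp [eval_finset_sum]
  rw [hfun, iteratedDeriv_polyeval, iter_deriv_add, iterate_derivative_sum]
  simp only [iterate_derivative_C_mul, iterate_derivative_X_pow_eq_C_mul]
  rw [eval_add, eval_finset_sum]
  simp only [eval_mul, eval_C, eval_pow, eval_X, F]
  congr 1
  apply Finset.sum_congr rfl
  intro i hi
  ring

lemma Icc_split (r : ℕ) (hr : 1 ≤ r) :
    Finset.Icc 1 r = insert 1 (Finset.Icc 2 r) := by
  ext a
  simp only [Finset.mem_Icc, Finset.mem_insert]
  omega

lemma bc (K : ℕ) (hK : 3 ≤ K) (x : ℕ → ℝ) (t : ℝ)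
    (hx : ∀ r ∈ Finset.Icc 2 (K-1),
      x r = ((A K r : ℝ)) * t^(r+1) + ((B K r : ℝ)) * x 1 * t^(r-1)) :
    ∀ j ∈ Finset.Icc 1 (K-2), F K x t j = 0 := by
  intro j hj
  rw [Finset.mem_Icc] at hj
  obtain ⟨r, hr2, hrK, rfl⟩ : ∃ r, 2 ≤ r ∧ r ≤ K-1 ∧ j = K - r :=
    ⟨K - j, by omega, by omega, by omega⟩
  unfold F
  have hrestrict : ∑ i ∈ Finset.Icc 1 (K-1),
        x i * ((K-i).descFactorial (K-r) : ℝ) * t^(K-i-(K-r))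
      = ∑ i ∈ Finset.Icc 1 r, x i * ((K-i).descFactorial (K-r) : ℝ) * t^(K-i-(K-r)) := by
    symm
    apply Finset.sum_subset
    · intro a ha
      rw [Finset.mem_Icc] at *
      omega
    · intro i hi hni
      rw [Finset.mem_Icc] at hi
      have hlt : K - i < K - r := by
        simp only [Finset.mem_Icc] at hni
        omega
      rw [Nat.descFactorial_eq_zero_iff_lt.mpr hlt]
      simp
  rw [hrestrict]
  have hIcc := Icc_split r (by omega)
  have h1n : (1:ℕ) ∉ Finset.Icc 2 r := by simp
  rw [hIcc, Finset.sum_insert h1n]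
  have hterm : ∀ i ∈ Finset.Icc 2 r,
      x i * ((K-i).descFactorial (K-r) : ℝ) * t^(K-i-(K-r))
        = (((A K i : ℝ)) * ((K-i).descFactorial (K-r):ℝ)) * t^(r+1)
          + (((B K i : ℝ)) * ((K-i).descFactorial (K-r):ℝ)) * (x 1 * t^(r-1)) := by
    intro i hi
    rw [Finset.mem_Icc] at hi
    rw [hx i (Finset.mem_Icc.mpr ⟨hi.1, hi.2.trans hrK⟩)]
    have e : K - i - (K-r) = r - i := by omega
    rw [e]
    have e1 : t^(i+1) * t^(r-i) = t^(r+1) := by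
      rw [← pow_add]; congr 1; omega
    have e2 : t^(i-1) * t^(r-i) = t^(r-1) := by
      rw [← pow_add]; congr 1; omega
    have expand : ((A K i : ℝ) * t^(i+1) + (B K i : ℝ) * x 1 * t^(i-1))
          * ((K-i).descFactorial (K-r) : ℝ) * t^(r-i)
        = (((A K i : ℝ)) * ((K-i).descFactorial (K-r):ℝ)) * (t^(i+1) * t^(r-i))
          + (((B K i : ℝ)) * ((K-i).descFactorial (K-r):ℝ)) * (x 1 * (t^(i-1) * t^(r-i))) := by
      ring
    rw [expand, e1, e2]
  rw [Finset.sum_congr rfl hterm, Finset.sum_add_distrib, ← Finset.sum_mul, ← Finset.sum_mul]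
  have ea : K+1-(K-r) = r+1 := by omega
  have eb : K-1-(K-r) = r-1 := by omega
  rw [ea, eb]
  have hA := Ialpha_real K r hK hr2 hrK
  have hB := Ibeta_real K r hK hr2 hrK
  rw [hIcc, Finset.sum_insert h1n] at hA hB
  rw [A_one K hK] at hA
  rw [B_one K] at hB
  simp only [Int.cast_zero, Int.cast_one, zero_mul, zero_add, one_mul] at hA hB
  linear_combination (t^(r+1)) * hA + (x 1 * t^(r-1)) * hB

lemma uniq (K : ℕ) (hK : 3 ≤ K) (x y : ℕ → ℝ) (t : ℝ) (h1 : x 1 = y 1)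
    (hx : ∀ j ∈ Finset.Icc 1 (K-2), F K x t j = 0)
    (hy : ∀ j ∈ Finset.Icc 1 (K-2), F K y t j = 0) :
    ∀ r ∈ Finset.Icc 2 (K-1), x r = y r := by
  intro r
  induction r using Nat.strong_induction_on with
  | _ r ih =>
  intro hr
  rw [Finset.mem_Icc] at hr
  have hj : K - r ∈ Finset.Icc 1 (K-2) := by
    rw [Finset.mem_Icc]; omega
  have hxj := hx _ hj
  have hyj := hy _ hj
  unfold F at hxj hyj
  have hsum : ∑ i ∈ Finset.Icc 1 (K-1),
      (x i - y i) * ((K-i).descFactorial (K-r) : ℝ) * t^(K-i-(K-r)) = 0 := by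
    have e : ∀ i ∈ Finset.Icc 1 (K-1),
        (x i - y i) * ((K-i).descFactorial (K-r) : ℝ) * t^(K-i-(K-r))
          = x i * ((K-i).descFactorial (K-r) : ℝ) * t^(K-i-(K-r))
            - y i * ((K-i).descFactorial (K-r) : ℝ) * t^(K-i-(K-r)) := by
      intro i hi; ring
    rw [Finset.sum_congr rfl e, Finset.sum_sub_distrib]
    linarith [hxj, hyj]
  have hr_mem : r ∈ Finset.Icc 1 (K-1) := by
    rw [Finset.mem_Icc]; omega
  have hzero : ∀ b ∈ Finset.Icc 1 (K-1), b ≠ r →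
      (x b - y b) * ((K-b).descFactorial (K-r) : ℝ) * t^(K-b-(K-r)) = 0 := by
    intro b hb hbr
    rw [Finset.mem_Icc] at hb
    rcases lt_trichotomy b r with hlt | heq | hgt
    · rcases Nat.lt_or_ge b 2 with hb1 | hb2
      · have : b = 1 := by omega
        rw [this, h1]
        ring
      · have : x b = y b := ih b hlt (Finset.mem_Icc.mpr ⟨hb2, by omega⟩)
        rw [this]
        ring
    · exact absurd heq hbr
    · have hltd : K - b < K - r := by omega
      rw [Nat.descFactorial_eq_zero_iff_lt.mpr hltd]
      simp
  rw [Finset.sum_eq_single_of_mem r hr_mem hzero] at hsum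
  have hds : (K-r).descFactorial (K-r) = (K-r).factorial := Nat.descFactorial_self _
  have hex : K - r - (K-r) = 0 := by omega
  rw [hds, hex, pow_zero, mul_one] at hsum
  have hfac : ((K-r).factorial : ℝ) ≠ 0 := by
    exact_mod_cast (Nat.factorial_pos (K-r)).ne'
  have := mul_eq_zero.mp hsum
  rcases this with h | h
  · linarith
  · exact absurd h hfac

end Stmt4Aux

/-- For every `K ≥ 3` there exist nonzero constants `α_2, …, α_{K-1}` and
`β_2, …, β_{K-1}` such that the system `∂^j γ/∂t^j (x,t) = 0` for `j = 1, …, K-2`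
is equivalent to `x r = α r * t^(r+1) + β r * x 1 * t^(r-1)` for `r = 2, …, K-1`,
where `γ(x,t) = t^(K+1) + ∑_{i=1}^{K-1} x i * t^(K-i)`. -/
theorem stmt4 (K : ℕ) (hK : 3 ≤ K) :
    ∃ α β : ℕ → ℝ,
      (∀ r ∈ Finset.Icc 2 (K - 1), α r ≠ 0 ∧ β r ≠ 0) ∧
      ∀ (x : ℕ → ℝ) (t : ℝ),
        (∀ j ∈ Finset.Icc 1 (K - 2),
            iteratedDeriv j
              (fun s : ℝ => s ^ (K + 1) + ∑ i ∈ Finset.Icc 1 (K - 1), x i * s ^ (K - i)) t = 0)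
          ↔ (∀ r ∈ Finset.Icc 2 (K - 1),
              x r = α r * t ^ (r + 1) + β r * x 1 * t ^ (r - 1)) := by
  classical
  refine ⟨fun r => ((Stmt4Aux.A K r : ℝ)), fun r => ((Stmt4Aux.B K r : ℝ)), ?_, ?_⟩
  · intro r hr
    rw [Finset.mem_Icc] at hr
    constructor
    · simp only []
      exact_mod_cast Stmt4Aux.A_ne_zero K r hK hr.1 hr.2
    · simp only []
      exact_mod_cast Stmt4Aux.B_ne_zero K r hK hr.1 hr.2
  · intro x t
    constructor
    · intro h r hr
      set y : ℕ → ℝ := fun i => if i = 1 then x 1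
        else ((Stmt4Aux.A K i : ℝ)) * t^(i+1) + ((Stmt4Aux.B K i : ℝ)) * x 1 * t^(i-1) with hy
      have hy1 : y 1 = x 1 := by simp [hy]
      have hyformula : ∀ s ∈ Finset.Icc 2 (K-1),
          y s = ((Stmt4Aux.A K s : ℝ)) * t^(s+1) + ((Stmt4Aux.B K s : ℝ)) * y 1 * t^(s-1) := by
        intro s hs
        rw [Finset.mem_Icc] at hs
        rw [hy1]
        simp only [hy]
        rw [if_neg (by omega)]
      have hyEq := Stmt4Aux.bc K hK y t hyformula
      have hxEq : ∀ j ∈ Finset.Icc 1 (K-2), Stmt4Aux.F K x t j = 0 := by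
        intro j hj
        rw [← Stmt4Aux.eq_formula]
        exact h j hj
      have hxy := Stmt4Aux.uniq K hK x y t hy1.symm hxEq hyEq r hr
      rw [Finset.mem_Icc] at hr
      rw [hxy]
      simp only [hy]
      rw [if_neg (by omega)]
    · intro h j hj
      rw [Stmt4Aux.eq_formula]
      exact Stmt4Aux.bc K hK x t h j hj
end

section
/- For every integer K ≥ 3, letting α_2,…,α_{K−1} and β_2,…,β_{K−1} be the unique real constants such that the system {∂^jγ/∂t^j(x,t) = 0, j = 1,…,K−2} is equivalent to {x_r = α_r·t^{r+1} + β_r·x_1·t^{r−1}, r = 2,…,K−1}, there exist nonzero real constants A and B, depending only on K, such that for all (x_1, t) ∈ ℝ², substituting x_r = α_r t^{r+1} + β_r x_1 t^{r−1} (r = 2,…,K−1) into γ yields γ(x_1, α_2 t^3 + β_2 x_1 t, …, α_{K−1} t^K + β_{K−1} x_1 t^{K−2}, t) = A·t^{K+1} + B·x_1·t^{K−1}. -/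
open Polynomial Finset

lemma iterDeriv_eval (n : ℕ) (p : Polynomial ℝ) :
    iteratedDeriv n (fun s : ℝ => p.eval s) = fun t => (derivative^[n] p).eval t := by
  induction n generalizing p with
  | zero => simp
  | succ n ih =>
    rw [iteratedDeriv_succ']
    have h1 : deriv (fun s : ℝ => p.eval s) = fun s => p.derivative.eval s :=
      funext fun x => p.deriv
    rw [h1, ih, Function.iterate_succ_apply]


lemma keyB (k : ℕ) (b : ℕ → ℝ) (hb1 : b 1 = 1)
    (hder : ∀ j ∈ Finset.Icc 1 (k+1),
      (derivative^[j] (∑ i ∈ Finset.Icc 1 (k+2), C (b i) * X ^ (k+3-i) : ℝ[X])).eval 1 = 0) :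
    (∑ i ∈ Finset.Icc 1 (k+2), C (b i) * X ^ (k+3-i) : ℝ[X]).eval 1 ≠ 0 := by
  set v : ℝ[X] := ∑ i ∈ Finset.Icc 1 (k+2), C (b i) * X ^ (k+3-i) with hvdef
  have hins : Finset.Icc 1 (k+2) = insert 1 (Finset.Icc 2 (k+2)) := by
    ext m; simp; omega
  have hv : v = X ^ (k+2) + ∑ i ∈ Finset.Icc 2 (k+2), C (b i) * X ^ (k+3-i) := by
    rw [hvdef, hins, Finset.sum_insert (by simp)]
    norm_num [hb1]
  have hS : (∑ i ∈ Finset.Icc 2 (k+2), C (b i) * X ^ (k+3-i) : ℝ[X]).degree < (k+2 : ℕ) := by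
    refine lt_of_le_of_lt (degree_sum_le _ _) ?_
    rw [Finset.sup_lt_iff (by exact_mod_cast WithBot.bot_lt_coe _)]
    intro i hi
    simp only [Finset.mem_Icc] at hi
    refine lt_of_le_of_lt (degree_C_mul_X_pow_le _ _) ?_
    exact_mod_cast Nat.lt_of_lt_of_le (by omega) le_rfl
  have hm : v.Monic := by rw [hv]; exact monic_X_pow_add hS
  have hv0 : v ≠ 0 := hm.ne_zero
  have hdeg : v.natDegree = k + 2 := by
    have : v.degree = (k+2 : ℕ) := by
      rw [hv, degree_add_eq_left_of_degree_lt (by rwa [degree_X_pow]), degree_X_pow]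
    exact natDegree_eq_of_degree_eq_some this
  intro hA
  have hroot : ∀ m ≤ k+1, (derivative^[m] v).IsRoot 1 := by
    intro m hm'
    rcases Nat.eq_zero_or_pos m with rfl | hmpos
    · simpa [IsRoot] using hA
    · exact hder m (Finset.mem_Icc.mpr ⟨hmpos, hm'⟩)
  have hlt : k+1 < rootMultiplicity 1 v :=
    lt_rootMultiplicity_of_isRoot_iterate_derivative_of_mem_nonZeroDivisors hv0 hroot
      (mem_nonZeroDivisors_of_ne_zero (by exact_mod_cast (Nat.factorial_ne_zero (k+1))))
  have hdvd : (X - C (1:ℝ)) ^ (k+2) ∣ v :=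
    dvd_trans (pow_dvd_pow _ hlt) (pow_rootMultiplicity_dvd v 1)
  obtain ⟨q, hq⟩ := hdvd
  have hq0 : q ≠ 0 := by rintro rfl; rw [mul_zero] at hq; exact hv0 hq
  have hpm : ((X - C (1:ℝ)) ^ (k+2)).Monic := (monic_X_sub_C 1).pow _
  have hqdeg : q.natDegree = 0 := by
    have := natDegree_mul (pow_ne_zero (k+2) (X_sub_C_ne_zero (1:ℝ))) hq0
    rw [← hq, hdeg, natDegree_pow, natDegree_X_sub_C] at this
    omega
  have hqm : q.Monic := by
    have : v.leadingCoeff = ((X - C (1:ℝ)) ^ (k+2)).leadingCoeff * q.leadingCoeff := by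
      rw [hq, leadingCoeff_mul]
    rw [hm.leadingCoeff, hpm.leadingCoeff, one_mul] at this
    exact this.symm
  have hq1 : q = 1 := (hqm.natDegree_eq_zero).mp hqdeg
  rw [hq1, mul_one] at hq
  have he0 : v.eval 0 = 0 := by
    rw [hvdef, eval_finset_sum]
    refine Finset.sum_eq_zero fun i hi => ?_
    simp only [Finset.mem_Icc] at hi
    simp [zero_pow (by omega : k+3-i ≠ 0)]
  rw [hq] at he0
  simp only [eval_pow, eval_sub, eval_X, eval_C, zero_sub] at he0
  exact pow_ne_zero _ (neg_ne_zero.mpr one_ne_zero) he0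

lemma keyA (k : ℕ) (a : ℕ → ℝ) (ha1 : a 1 = 0)
    (hder : ∀ j ∈ Finset.Icc 1 (k+1),
      (derivative^[j] (X ^ (k+4) + ∑ i ∈ Finset.Icc 1 (k+2), C (a i) * X ^ (k+3-i) : ℝ[X])).eval 1 = 0) :
    (X ^ (k+4) + ∑ i ∈ Finset.Icc 1 (k+2), C (a i) * X ^ (k+3-i) : ℝ[X]).eval 1 ≠ 0 := by
  set S : ℝ[X] := ∑ i ∈ Finset.Icc 1 (k+2), C (a i) * X ^ (k+3-i) with hSdef
  set u : ℝ[X] := X ^ (k+4) + S with hudef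
  have hS : S.degree < (k+4 : ℕ) := by
    refine lt_of_le_of_lt (degree_sum_le _ _) ?_
    rw [Finset.sup_lt_iff (by exact_mod_cast WithBot.bot_lt_coe _)]
    intro i hi
    simp only [Finset.mem_Icc] at hi
    refine lt_of_le_of_lt (degree_C_mul_X_pow_le _ _) ?_
    exact_mod_cast (by omega : k+3-i < k+4)
  have hm : u.Monic := monic_X_pow_add hS
  have hu0 : u ≠ 0 := hm.ne_zero
  have hdeg : u.natDegree = k + 4 := by
    have : u.degree = (k+4 : ℕ) := by
      rw [hudef, degree_add_eq_left_of_degree_lt (by rwa [degree_X_pow]), degree_X_pow]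
    exact natDegree_eq_of_degree_eq_some this
  intro hA
  have hroot : ∀ m ≤ k+1, (derivative^[m] u).IsRoot 1 := by
    intro m hm'
    rcases Nat.eq_zero_or_pos m with rfl | hmpos
    · simpa [IsRoot] using hA
    · exact hder m (Finset.mem_Icc.mpr ⟨hmpos, hm'⟩)
  have hlt : k+1 < rootMultiplicity 1 u :=
    lt_rootMultiplicity_of_isRoot_iterate_derivative_of_mem_nonZeroDivisors hu0 hroot
      (mem_nonZeroDivisors_of_ne_zero (by exact_mod_cast (Nat.factorial_ne_zero (k+1))))
  have hdvd : (X - C (1:ℝ)) ^ (k+2) ∣ u :=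
    dvd_trans (pow_dvd_pow _ hlt) (pow_rootMultiplicity_dvd u 1)
  -- u.eval 0 = 0, so X ∣ u
  have he0 : u.eval 0 = 0 := by
    rw [hudef, hSdef]
    simp only [eval_add, eval_pow, eval_X, eval_finset_sum, eval_mul, eval_C]
    rw [zero_pow (by omega : k+4 ≠ 0), zero_add]
    refine Finset.sum_eq_zero fun i hi => ?_
    simp only [Finset.mem_Icc] at hi
    simp [zero_pow (by omega : k+3-i ≠ 0)]
  have hXdvd : (X : ℝ[X]) ∣ u := X_dvd_iff.mpr (by rwa [coeff_zero_eq_eval_zero])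
  have hcop : IsCoprime (X : ℝ[X]) ((X - C 1) ^ (k+2)) := by
    refine IsCoprime.pow_right ⟨1, -1, ?_⟩
    simp only [one_mul, neg_mul, neg_sub]
    ring_nf
    simp
  have hmul : (X * (X - C 1) ^ (k+2) : ℝ[X]) ∣ u := hcop.mul_dvd hXdvd hdvd
  obtain ⟨w, hw⟩ := hmul
  have hXC0 : (X * (X - C (1:ℝ)) ^ (k+2)) ≠ 0 :=
    mul_ne_zero X_ne_zero (pow_ne_zero _ (X_sub_C_ne_zero 1))
  have hw0 : w ≠ 0 := by rintro rfl; rw [mul_zero] at hw; exact hu0 hw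
  have hXCm : (X * (X - C (1:ℝ)) ^ (k+2)).Monic := monic_X.mul ((monic_X_sub_C 1).pow _)
  have hXCdeg : (X * (X - C (1:ℝ)) ^ (k+2)).natDegree = k + 3 := by
    rw [natDegree_mul X_ne_zero (pow_ne_zero _ (X_sub_C_ne_zero 1)), natDegree_X,
      natDegree_pow, natDegree_X_sub_C]
    omega
  have hwdeg : w.natDegree = 1 := by
    have := natDegree_mul hXC0 hw0
    rw [← hw, hdeg, hXCdeg] at this
    omega
  have hwm : w.Monic := by
    have : u.leadingCoeff = (X * (X - C (1:ℝ)) ^ (k+2)).leadingCoeff * w.leadingCoeff := by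
      rw [hw, leadingCoeff_mul]
    rw [hm.leadingCoeff, hXCm.leadingCoeff, one_mul] at this
    exact this.symm
  have hwX : w = X + C (w.coeff 0) := by
    have h1 := eq_X_add_C_of_natDegree_le_one (le_of_eq hwdeg)
    have : w.coeff 1 = 1 := by
      have := hwm.leadingCoeff
      rwa [leadingCoeff, hwdeg] at this
    rw [this] at h1
    simpa using h1
  set b : ℝ := w.coeff 0
  set p : ℝ[X] := (X - C (1:ℝ)) ^ (k+2) with hpdef
  have hu2 : u = p * X^2 + C b * (p * X^1) := by
    rw [hw, hwX]; ring
  -- coefficients of p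
  have hpc : ∀ j : ℕ, p.coeff j = (-1 : ℝ)^(k+2-j) * ((k+2).choose j : ℝ) := by
    intro j
    rw [hpdef, show (X - C (1:ℝ)) = X + C (-1) by simp [sub_eq_add_neg], coeff_X_add_C_pow]
  -- coefficient of u at k+3 (two ways)
  have hc1 : u.coeff (k+3) = 0 := by
    rw [hudef, coeff_add, coeff_X_pow, if_neg (by omega), hSdef, finset_sum_coeff]
    rw [zero_add]
    refine Finset.sum_eq_zero fun i hi => ?_
    simp only [Finset.mem_Icc] at hi
    rw [coeff_C_mul, coeff_X_pow, if_neg (by omega), mul_zero]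
  have hc2 : u.coeff (k+2) = 0 := by
    rw [hudef, coeff_add, coeff_X_pow, if_neg (by omega), hSdef, finset_sum_coeff, zero_add]
    rw [Finset.sum_eq_single_of_mem 1 (by simp)]
    · rw [coeff_C_mul, coeff_X_pow, if_pos (by omega), ha1, zero_mul]
    · intro i hi hne
      simp only [Finset.mem_Icc] at hi
      rw [coeff_C_mul, coeff_X_pow, if_neg (by omega), mul_zero]
  have hr1 : u.coeff (k+3) = p.coeff (k+1) + b * p.coeff (k+2) := by
    rw [hu2, coeff_add, coeff_C_mul, coeff_mul_X_pow', coeff_mul_X_pow',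
      if_pos (by omega : 2 ≤ k+3), if_pos (by omega : 1 ≤ k+3),
      show k+3-2 = k+1 from by omega, show k+3-1 = k+2 from by omega]
  have hr2 : u.coeff (k+2) = p.coeff k + b * p.coeff (k+1) := by
    rw [hu2, coeff_add, coeff_C_mul, coeff_mul_X_pow', coeff_mul_X_pow',
      if_pos (by omega : 2 ≤ k+2), if_pos (by omega : 1 ≤ k+2),
      show k+2-2 = k from by omega, show k+2-1 = k+1 from by omega]
  rw [hc1, hpc, hpc] at hr1
  rw [hc2, hpc, hpc] at hr2
  rw [show k+2-(k+1) = 1 from by omega, show k+2-(k+2) = 0 from by omega,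
    Nat.choose_self] at hr1
  rw [show k+2-(k+1) = 1 from by omega, show k+2-k = 2 from by omega] at hr2
  norm_num at hr1 hr2
  have hch1 : (k+2).choose (k+1) = k+2 := Nat.choose_succ_self_right (k+1)
  have hch2' : (k+2).choose k < (k+2)*(k+2) := by
    have hsym := Nat.choose_symm (show k ≤ k+2 by omega)
    rw [show (k+2)-k = 2 from by omega] at hsym
    have h2 := Nat.choose_two_right (k+2)
    have h3 : (k+2)*(k+2-1)/2 ≤ (k+2)*(k+2-1) := Nat.div_le_self _ _
    have h4 : (k+2)*(k+2-1) < (k+2)*(k+2) := by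
      have he : k+2-1 = k+1 := by omega
      rw [he]
      exact Nat.mul_lt_mul_of_le_of_lt (le_refl _) (by omega) (by omega)
    omega
  have hlt' : ((k+2).choose k : ℝ) < (((k+2)*(k+2) : ℕ) : ℝ) := by exact_mod_cast hch2'
  push_cast at hr1 hr2 hlt'
  nlinarith [hr1, hr2, hlt']


/-- For `K ≥ 3`, if `α_r, β_r` (`r = 2, …, K-1`) are constants such that the system
`∂^j γ/∂t^j (x,t) = 0` for `j = 1, …, K-2` is equivalent to
`x r = α r * t^(r+1) + β r * x 1 * t^(r-1)` for `r = 2, …, K-1`, then there are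
nonzero constants `A`, `B` such that substituting these relations into `γ` gives
`A * t^(K+1) + B * x_1 * t^(K-1)`, where
`γ(x,t) = t^(K+1) + ∑_{i=1}^{K-1} x i * t^(K-i)`. -/
theorem stmt5 (K : ℕ) (hK : 3 ≤ K) (α β : ℕ → ℝ)
    (h : ∀ (x : ℕ → ℝ) (t : ℝ),
        (∀ j ∈ Finset.Icc 1 (K - 2),
            iteratedDeriv j
              (fun s : ℝ => s ^ (K + 1) + ∑ i ∈ Finset.Icc 1 (K - 1), x i * s ^ (K - i)) t = 0)
          ↔ (∀ r ∈ Finset.Icc 2 (K - 1),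
              x r = α r * t ^ (r + 1) + β r * x 1 * t ^ (r - 1))) :
    ∃ A B : ℝ, A ≠ 0 ∧ B ≠ 0 ∧ ∀ (x1 t : ℝ),
      t ^ (K + 1) + ∑ i ∈ Finset.Icc 1 (K - 1),
          (if i = 1 then x1 else α i * t ^ (i + 1) + β i * x1 * t ^ (i - 1)) * t ^ (K - i)
        = A * t ^ (K + 1) + B * x1 * t ^ (K - 1) := by
  obtain ⟨k, rfl⟩ : ∃ k, K = k + 3 := ⟨K - 3, by omega⟩
  clear hK
  simp only [show k+3-2 = k+1 from by omega, show k+3-1 = k+2 from by omega,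
    show k+3+1 = k+4 from by omega] at h ⊢
  -- the x-functions
  set xf : ℝ → ℕ → ℝ := fun x1 r => if r = 1 then x1 else α r + β r * x1 with hxf
  -- derivative conditions from h
  have hd : ∀ x1 : ℝ, ∀ j ∈ Finset.Icc 1 (k+1),
      iteratedDeriv j
        (fun s : ℝ => s ^ (k+4) + ∑ i ∈ Finset.Icc 1 (k+2), xf x1 i * s ^ (k+3-i)) 1 = 0 := by
    intro x1
    refine (h (xf x1) 1).mpr ?_
    intro r hr
    simp only [Finset.mem_Icc] at hr
    simp only [hxf, if_neg (show r ≠ 1 by omega), if_pos rfl, one_pow, mul_one]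
  -- polynomial versions
  have hpoly : ∀ c : ℕ → ℝ,
      (fun s : ℝ => s ^ (k+4) + ∑ i ∈ Finset.Icc 1 (k+2), c i * s ^ (k+3-i))
        = fun s => (X ^ (k+4) + ∑ i ∈ Finset.Icc 1 (k+2), C (c i) * X ^ (k+3-i) : ℝ[X]).eval s := by
    intro c
    funext s
    simp [eval_finset_sum]
  have hdP : ∀ x1 : ℝ, ∀ j ∈ Finset.Icc 1 (k+1),
      (derivative^[j] (X ^ (k+4) + ∑ i ∈ Finset.Icc 1 (k+2), C (xf x1 i) * X ^ (k+3-i) : ℝ[X])).eval 1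
        = 0 := by
    intro x1 j hj
    have := hd x1 j hj
    rw [hpoly (xf x1), iterDeriv_eval] at this
    exact this
  have hins : Finset.Icc 1 (k+2) = insert 1 (Finset.Icc 2 (k+2)) := by
    ext m; simp; omega
  -- A
  have hA := keyA k (xf 0) (by simp [hxf]) (hdP 0)
  have hAval : (X ^ (k+4) + ∑ i ∈ Finset.Icc 1 (k+2), C (xf 0 i) * X ^ (k+3-i) : ℝ[X]).eval 1
      = 1 + ∑ i ∈ Finset.Icc 2 (k+2), α i := by
    simp only [eval_add, eval_pow, eval_X, eval_finset_sum, eval_mul, eval_C, one_pow, mul_one]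
    congr 1
    rw [hins, Finset.sum_insert (by simp)]
    rw [show xf 0 1 = 0 from if_pos rfl, zero_add]
    refine Finset.sum_congr rfl fun i hi => ?_
    simp only [Finset.mem_Icc] at hi
    simp only [hxf, if_neg (show i ≠ 1 by omega), mul_zero, add_zero]
  rw [hAval] at hA
  -- B : difference polynomial
  set bb : ℕ → ℝ := fun r => if r = 1 then 1 else β r with hbb
  have hvP : (∑ i ∈ Finset.Icc 1 (k+2), C (bb i) * X ^ (k+3-i) : ℝ[X])
      = (X ^ (k+4) + ∑ i ∈ Finset.Icc 1 (k+2), C (xf 1 i) * X ^ (k+3-i))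
        - (X ^ (k+4) + ∑ i ∈ Finset.Icc 1 (k+2), C (xf 0 i) * X ^ (k+3-i)) := by
    rw [add_sub_add_left_eq_sub, ← Finset.sum_sub_distrib]
    refine Finset.sum_congr rfl fun i hi => ?_
    rw [← sub_mul, ← C_sub]
    congr 1
    by_cases hi1 : i = 1
    · simp [hbb, hxf, hi1]
    · simp only [hbb, hxf, if_neg hi1]; ring_nf
  have hdB : ∀ j ∈ Finset.Icc 1 (k+1),
      (derivative^[j] (∑ i ∈ Finset.Icc 1 (k+2), C (bb i) * X ^ (k+3-i) : ℝ[X])).eval 1 = 0 := by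
    intro j hj
    rw [hvP, iterate_derivative_sub, eval_sub, hdP 1 j hj, hdP 0 j hj, sub_zero]
  have hB := keyB k bb (by simp [hbb]) hdB
  have hBval : (∑ i ∈ Finset.Icc 1 (k+2), C (bb i) * X ^ (k+3-i) : ℝ[X]).eval 1
      = 1 + ∑ i ∈ Finset.Icc 2 (k+2), β i := by
    simp only [eval_finset_sum, eval_mul, eval_C, eval_pow, eval_X, one_pow, mul_one]
    rw [hins, Finset.sum_insert (by simp)]
    rw [show bb 1 = 1 from if_pos rfl]
    congr 1
    refine Finset.sum_congr rfl fun i hi => ?_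
    simp only [Finset.mem_Icc] at hi
    simp only [hbb, if_neg (show i ≠ 1 by omega)]
  rw [hBval] at hB
  -- conclusion
  refine ⟨1 + ∑ i ∈ Finset.Icc 2 (k+2), α i, 1 + ∑ i ∈ Finset.Icc 2 (k+2), β i, hA, hB, ?_⟩
  intro x1 t
  rw [hins, Finset.sum_insert (by simp)]
  have hbody : ∀ i ∈ Finset.Icc 2 (k+2),
      (if i = 1 then x1 else α i * t ^ (i + 1) + β i * x1 * t ^ (i - 1)) * t ^ (k+3-i)
        = α i * t ^ (k+4) + β i * x1 * t ^ (k+2) := by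
    intro i hi
    simp only [Finset.mem_Icc] at hi
    rw [if_neg (by omega)]
    rw [add_mul, mul_assoc, mul_assoc, ← pow_add, ← pow_add,
      show i + 1 + (k+3-i) = k+4 from by omega, show i - 1 + (k+3-i) = k+2 from by omega]
  rw [Finset.sum_congr rfl hbody, Finset.sum_add_distrib, ← Finset.sum_mul, ← Finset.sum_mul]
  have h2 : (∑ i ∈ Finset.Icc 2 (k+2), β i * x1) = (∑ i ∈ Finset.Icc 2 (k+2), β i) * x1 :=
    (Finset.sum_mul _ _ _).symm
  have h1t : (if (1:ℕ) = 1 then x1 else α 1 * t ^ (1 + 1) + β 1 * x1 * t ^ (1 - 1)) = x1 :=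
    if_pos rfl
  rw [h2, h1t, show k+3-1 = k+2 from by omega]
  ring
end

section
/- Let d ≥ 2, let U ⊆ ℝ^d be an open neighborhood of 0, and let F : U → ℝ be a C^∞ function with ∇F(0) = 0. Write H = Hess F(0) for the Hessian matrix of F at 0 and M for its top-left (d−1)×(d−1) submatrix (the Hessian at 0 of the restriction of F to the hyperplane {x_d = 0}). Assume det H ≠ 0 and det M ≠ 0. Then there exist ε_0 > 0 and an open neighborhood V ⊆ U of 0 such that for every ε with 0 < ε < ε_0 there is a unique point p̃(ε) ∈ V with ∇F(p̃(ε)) = −ε·e_d, and the last coordinate of p̃(ε) is nonzero, with sign(p̃(ε)_d) = −sign(det M)·sign(det H). -/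
open Filter Topology Matrix Set
open scoped ContDiff
set_option maxHeartbeats 1000000

/-- Sign computation helper. -/
private lemma sign_helper {a b : ℝ} (ha : a ≠ 0) (hb : b ≠ 0) :
    Real.sign (-(b⁻¹ * a)) = -(Real.sign a * Real.sign b) := by
  rcases ha.lt_or_gt with ha' | ha' <;> rcases hb.lt_or_gt with hb' | hb'
  · rw [Real.sign_of_neg ha', Real.sign_of_neg hb',
      Real.sign_of_neg (by nlinarith [inv_lt_zero.2 hb'])]
    ring
  · rw [Real.sign_of_neg ha', Real.sign_of_pos hb',
      Real.sign_of_pos (by nlinarith [inv_pos.2 hb'])]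
    ring
  · rw [Real.sign_of_pos ha', Real.sign_of_neg hb',
      Real.sign_of_pos (by nlinarith [inv_lt_zero.2 hb'])]
    ring
  · rw [Real.sign_of_pos ha', Real.sign_of_pos hb',
      Real.sign_of_neg (by nlinarith [inv_pos.2 hb'])]
    ring

/-- Slope sign helper. -/
private lemma slope_sign_helper {y ε c : ℝ} (hε : 0 < ε) (hc : c ≠ 0)
    (hx : |y / ε - c| < |c|) : y ≠ 0 ∧ Real.sign y = Real.sign c := by
  have hεne : ε ≠ 0 := ne_of_gt hε
  have hrec : y = ε * (y / ε) := by field_simp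
  rcases hc.lt_or_gt with hcneg | hcpos
  · have h1 : y / ε < 0 := by
      rw [abs_of_neg hcneg] at hx
      cases' abs_lt.mp hx with _ h2
      linarith
    have h2 : y < 0 := by nlinarith
    exact ⟨ne_of_lt h2, by rw [Real.sign_of_neg h2, Real.sign_of_neg hcneg]⟩
  · have h1 : 0 < y / ε := by
      rw [abs_of_pos hcpos] at hx
      cases' abs_lt.mp hx with h2 _
      linarith
    have h2 : 0 < y := by nlinarith
    exact ⟨ne_of_gt h2, by rw [Real.sign_of_pos h2, Real.sign_of_pos hcpos]⟩

/-- Let `F` be smooth on an open neighborhood `U` of `0` in `ℝ^d` (`d = n+2 ≥ 2`),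
with `∇F(0) = 0`. Let `H` be the Hessian matrix of `F` at `0` and `M` its top-left
`(d-1)×(d-1)` submatrix (the Hessian at `0` of the restriction of `F` to `{x_d = 0}`).
If `det H ≠ 0` and `det M ≠ 0`, then there are `ε₀ > 0` and an open neighborhood
`V ⊆ U` of `0` such that for every `0 < ε < ε₀` there is a unique `p ∈ V` with
`∇F(p) = -ε·e_d`, and its last coordinate is nonzero with
`sign(p_d) = -sign(det M)·sign(det H)`. -/
theorem stmt11 (n : ℕ) (U : Set (Fin (n + 2) → ℝ)) (hU : IsOpen U)
    (h0 : (0 : Fin (n + 2) → ℝ) ∈ U)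
    (F : (Fin (n + 2) → ℝ) → ℝ) (hF : ContDiffOn ℝ (⊤ : ℕ∞) F U)
    (hcrit : fderiv ℝ F 0 = 0)
    (H : Matrix (Fin (n + 2)) (Fin (n + 2)) ℝ)
    (hH : ∀ i j, H i j = fderiv ℝ (fun y => fderiv ℝ F y (Pi.single j 1)) 0 (Pi.single i 1))
    (M : Matrix (Fin (n + 1)) (Fin (n + 1)) ℝ)
    (hM : ∀ i j : Fin (n + 1), M i j = H i.castSucc j.castSucc)
    (hHdet : H.det ≠ 0) (hMdet : M.det ≠ 0) :
    ∃ ε₀ > (0 : ℝ), ∃ V : Set (Fin (n + 2) → ℝ),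
      IsOpen V ∧ (0 : Fin (n + 2) → ℝ) ∈ V ∧ V ⊆ U ∧
      ∀ ε : ℝ, 0 < ε → ε < ε₀ →
        ∃ p, (p ∈ V ∧
            ∀ j, fderiv ℝ F p (Pi.single j 1) = if j = Fin.last (n + 1) then -ε else 0) ∧
          (∀ q, q ∈ V →
            (∀ j, fderiv ℝ F q (Pi.single j 1) = if j = Fin.last (n + 1) then -ε else 0) →
            q = p) ∧
          p (Fin.last (n + 1)) ≠ 0 ∧
          Real.sign (p (Fin.last (n + 1))) = -(Real.sign M.det * Real.sign H.det) := by
  classical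
  set ll : Fin (n + 2) := Fin.last (n + 1) with hll
  set e : Fin (n + 2) → ℝ := Pi.single ll 1 with he
  set G : (Fin (n + 2) → ℝ) → (Fin (n + 2) → ℝ) :=
    fun y j => fderiv ℝ F y (Pi.single j 1) with hGdef
  -- smoothness of the gradient map
  have hF' : ContDiffOn ℝ ∞ (fderiv ℝ F) U :=
    ((contDiffOn_infty_iff_fderiv_of_isOpen hU).mp hF).2
  set L : ((Fin (n + 2) → ℝ) →L[ℝ] ℝ) →L[ℝ] (Fin (n + 2) → ℝ) :=
    ContinuousLinearMap.pi fun j => ContinuousLinearMap.apply ℝ ℝ (Pi.single j 1) with hLdef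
  have hGL : G = fun y => L (fderiv ℝ F y) := rfl
  have hGU : ContDiffOn ℝ ∞ G U := by
    rw [hGL]; exact L.contDiff.comp_contDiffOn hF'
  have hdiff : DifferentiableAt ℝ (fderiv ℝ F) 0 :=
    (hF'.differentiableOn (by simp)).differentiableAt (hU.mem_nhds h0)
  set K : (Fin (n + 2) → ℝ) →L[ℝ] ((Fin (n + 2) → ℝ) →L[ℝ] ℝ) :=
    fderiv ℝ (fderiv ℝ F) 0 with hKdef
  have hK : HasFDerivAt (fderiv ℝ F) K 0 := hdiff.hasFDerivAt
  have hHK : ∀ i j, H i j = K (Pi.single i 1) (Pi.single j 1) := by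
    intro i j
    rw [hH i j]
    have h1 : HasFDerivAt (⇑(ContinuousLinearMap.apply ℝ ℝ (Pi.single j 1)) ∘ fderiv ℝ F)
        ((ContinuousLinearMap.apply ℝ ℝ (Pi.single j 1)).comp K) 0 :=
      (ContinuousLinearMap.apply ℝ ℝ (Pi.single j 1)).hasFDerivAt.comp 0 hK
    have h2 : (fun y => fderiv ℝ F y (Pi.single j 1))
        = ⇑(ContinuousLinearMap.apply ℝ ℝ (Pi.single j 1)) ∘ fderiv ℝ F := rfl
    rw [h2, h1.fderiv]
    rfl
  -- the linear equivalence given by the (transposed) Hessian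
  have hBdet : IsUnit Hᵀ.det := by rw [Matrix.det_transpose]; exact hHdet.isUnit
  have hInv : Invertible Hᵀ := Hᵀ.invertibleOfIsUnitDet hBdet
  set A : (Fin (n + 2) → ℝ) ≃L[ℝ] (Fin (n + 2) → ℝ) :=
    (Hᵀ.toLinearEquiv' hInv).toContinuousLinearEquiv with hAdef
  have hGA : HasFDerivAt G (A : (Fin (n + 2) → ℝ) →L[ℝ] (Fin (n + 2) → ℝ)) 0 := by
    have h2 : HasFDerivAt (fun y => L (fderiv ℝ F y)) (L.comp K) 0 :=
      L.hasFDerivAt.comp 0 hK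
    have heq : L.comp K = (A : (Fin (n + 2) → ℝ) →L[ℝ] (Fin (n + 2) → ℝ)) := by
      apply ContinuousLinearMap.coe_injective
      apply Module.Basis.ext (Pi.basisFun ℝ (Fin (n + 2)))
      intro i
      rw [Pi.basisFun_apply]
      funext j
      have hlhs : (L.comp K) (Pi.single i 1) j = K (Pi.single i 1) (Pi.single j 1) := rfl
      have hrhs : (A : (Fin (n + 2) → ℝ) →L[ℝ] (Fin (n + 2) → ℝ)) (Pi.single i 1) j
          = Hᵀ.mulVec (Pi.single i 1) j := rfl
      show (L.comp K) (Pi.single i 1) j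
          = (A : (Fin (n + 2) → ℝ) →L[ℝ] (Fin (n + 2) → ℝ)) (Pi.single i 1) j
      rw [hlhs, hrhs, ← hHK i j]
      simp [Matrix.mulVec_single, Matrix.transpose_apply]
    rw [hGL, ← heq]; exact h2
  have hGs : HasStrictFDerivAt G
      (A : (Fin (n + 2) → ℝ) →L[ℝ] (Fin (n + 2) → ℝ)) 0 := by
    have hGc : ContDiffAt ℝ 1 G 0 :=
      (hGU.contDiffAt (hU.mem_nhds h0)).of_le (by exact_mod_cast le_top)
    exact hGc.hasStrictFDerivAt' hGA one_ne_zero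
  have hG0 : G 0 = 0 := by
    funext j
    show fderiv ℝ F 0 (Pi.single j 1) = 0
    rw [hcrit]; rfl
  -- local inverse
  set φ : OpenPartialHomeomorph (Fin (n + 2) → ℝ) (Fin (n + 2) → ℝ) :=
    hGs.toOpenPartialHomeomorph G with hφdef
  set ψ : (Fin (n + 2) → ℝ) → (Fin (n + 2) → ℝ) := hGs.localInverse G A 0 with hψdef
  have hψφ : ψ = φ.symm := hGs.localInverse_def
  have hψ0 : ψ 0 = 0 := by
    have := hGs.localInverse_apply_image; rwa [hG0] at this
  have hψs : HasStrictFDerivAt ψ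
      (A.symm : (Fin (n + 2) → ℝ) →L[ℝ] (Fin (n + 2) → ℝ)) 0 := by
    have := hGs.to_localInverse; rwa [hG0] at this
  -- the scalar function: last coordinate of the solution
  set h : ℝ → ℝ := fun ε => ψ ((-ε) • e) ll with hhdef
  have h00 : ((-(0 : ℝ)) • e : Fin (n + 2) → ℝ) = 0 := by simp
  have hzero : h 0 = 0 := by
    show ψ ((-(0 : ℝ)) • e) ll = 0
    rw [h00, hψ0]; rfl
  set m : ℝ →L[ℝ] (Fin (n + 2) → ℝ) :=
    ContinuousLinearMap.smulRight (ContinuousLinearMap.id ℝ ℝ) (-e) with hmdef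
  have hm : HasStrictFDerivAt (fun ε : ℝ => (-ε) • e) m 0 := by
    have h1 : (fun ε : ℝ => (-ε) • e) = fun ε : ℝ => m ε := by
      funext ε
      show (-ε) • e = ε • (-e)
      rw [smul_neg, neg_smul]
    rw [h1]
    exact m.hasStrictFDerivAt
  have hcomp : HasStrictFDerivAt (fun ε : ℝ => ψ ((-ε) • e))
      ((A.symm : (Fin (n + 2) → ℝ) →L[ℝ] (Fin (n + 2) → ℝ)).comp m) 0 := by
    have hψs' : HasStrictFDerivAt ψ
        (A.symm : (Fin (n + 2) → ℝ) →L[ℝ] (Fin (n + 2) → ℝ)) ((-(0 : ℝ)) • e) := by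
      rw [h00]; exact hψs
    exact hψs'.comp 0 hm
  set π : (Fin (n + 2) → ℝ) →L[ℝ] ℝ := ContinuousLinearMap.proj ll with hπdef
  have hhs : HasStrictFDerivAt h
      (π.comp ((A.symm : (Fin (n + 2) → ℝ) →L[ℝ] (Fin (n + 2) → ℝ)).comp m)) 0 :=
    π.hasStrictFDerivAt.comp 0 hcomp
  set c : ℝ := A.symm (-e) ll with hcdef
  have hder : HasDerivAt h c 0 := by
    have h1 := hhs.hasFDerivAt.hasDerivAt
    have h2 : (π.comp ((A.symm : (Fin (n + 2) → ℝ) →L[ℝ] (Fin (n + 2) → ℝ)).comp m)) 1 = c := by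
      show (A.symm ((1 : ℝ) • (-e))) ll = c
      rw [one_smul]
    rwa [h2] at h1
  -- value of c
  have hMsub : M = H.submatrix Fin.castSucc Fin.castSucc := by
    ext i j; rw [hM i j]; rfl
  have hadj : H.adjugate ll ll = M.det := by
    rw [hll, Matrix.adjugate_fin_succ_eq_det_submatrix, Fin.succAbove_last, ← hMsub]
    have : Even ((Fin.last (n + 1) : ℕ) + (Fin.last (n + 1) : ℕ)) := ⟨n + 1, by simp⟩
    rw [this.neg_one_pow, one_mul]
  have hc : c = -(H.det⁻¹ * M.det) := by
    have h1 : A.symm (-e) = -(A.symm e) := by rw [map_neg]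
    have h2 : A.symm e = (⅟Hᵀ).mulVec e := by
      show (Hᵀ.toLinearEquiv' hInv).toContinuousLinearEquiv.symm e = _
      rw [LinearEquiv.coe_toContinuousLinearEquiv_symm']
      rfl
    have h3 : (⅟Hᵀ).mulVec e ll = Hᵀ⁻¹ ll ll := by
      rw [Matrix.invOf_eq_nonsing_inv, he]
      simp [Matrix.mulVec_single]
    rw [hcdef, h1, Pi.neg_apply, h2, h3, Matrix.inv_def, Matrix.smul_apply,
      Matrix.det_transpose, ← Matrix.adjugate_transpose, Matrix.transpose_apply,
      hadj, Ring.inverse_eq_inv, smul_eq_mul]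
  have hc0 : c ≠ 0 := by
    rw [hc]
    exact neg_ne_zero.mpr (mul_ne_zero (inv_ne_zero hHdet) hMdet)
  have hsign : Real.sign c = -(Real.sign M.det * Real.sign H.det) := by
    rw [hc]; exact sign_helper hMdet hHdet
  -- eventually statements
  have htend0 : Tendsto (fun ε : ℝ => (-ε) • e) (𝓝 0) (𝓝 0) := by
    have hcont : Continuous fun ε : ℝ => (-ε) • e :=
      (continuous_neg.smul continuous_const)
    have := hcont.tendsto 0
    rwa [h00] at this
  have htgt : φ.target ∈ 𝓝 (0 : Fin (n + 2) → ℝ) := by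
    have h1 := hGs.image_mem_toOpenPartialHomeomorph_target
    rw [hG0] at h1
    exact φ.open_target.mem_nhds h1
  have ev1 : ∀ᶠ ε in 𝓝 (0 : ℝ), (-ε) • e ∈ φ.target :=
    htend0.eventually_mem htgt
  have hψcont : ContinuousAt ψ 0 := by
    have := hGs.localInverse_continuousAt; rwa [hG0] at this
  have htendψ : Tendsto (fun ε : ℝ => ψ ((-ε) • e)) (𝓝 0) (𝓝 0) := by
    have h1 := hψcont.tendsto
    rw [hψ0] at h1
    exact h1.comp htend0
  have ev2 : ∀ᶠ ε in 𝓝 (0 : ℝ), ψ ((-ε) • e) ∈ U :=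
    htendψ.eventually_mem (hU.mem_nhds h0)
  have ev3 : ∀ᶠ ε in 𝓝 (0 : ℝ), G (ψ ((-ε) • e)) = (-ε) • e := by
    have h3 := hGs.eventually_right_inverse
    rw [hG0] at h3
    exact htend0.eventually h3
  have ev4 : ∀ᶠ ε in 𝓝[>] (0 : ℝ), |slope h 0 ε - c| < |c| := by
    have hslope := hasDerivAt_iff_tendsto_slope.mp hder
    have hball : ∀ᶠ x in 𝓝 c, |x - c| < |c| := by
      have hb : Metric.ball c |c| ∈ 𝓝 c := Metric.ball_mem_nhds c (abs_pos.2 hc0)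
      filter_upwards [hb] with x hx
      rwa [Metric.mem_ball, Real.dist_eq] at hx
    exact (hslope.eventually hball).filter_mono
      (nhdsWithin_mono 0 fun x hx => ne_of_gt hx)
  have evAll : ∀ᶠ ε in 𝓝[>] (0 : ℝ),
      ((-ε) • e ∈ φ.target ∧ ψ ((-ε) • e) ∈ U ∧ G (ψ ((-ε) • e)) = (-ε) • e)
        ∧ |slope h 0 ε - c| < |c| :=
    ((ev1.and (ev2.and ev3)).filter_mono nhdsWithin_le_nhds).and ev4
  obtain ⟨ε₀, hε₀mem, hIoo⟩ := mem_nhdsGT_iff_exists_Ioo_subset.mp evAll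
  refine ⟨ε₀, hε₀mem, U ∩ φ.source, hU.inter φ.open_source,
    ⟨h0, hGs.mem_toOpenPartialHomeomorph_source⟩, inter_subset_left, ?_⟩
  intro ε hε1 hε2
  obtain ⟨⟨hp1, hp2, hp3⟩, hp4⟩ := hIoo ⟨hε1, hε2⟩
  set p : Fin (n + 2) → ℝ := ψ ((-ε) • e) with hpdef
  have hpsrc : p ∈ φ.source := by
    rw [hpdef, hψφ]; exact φ.map_target hp1
  have hφcoe : (φ : (Fin (n + 2) → ℝ) → (Fin (n + 2) → ℝ)) = G :=
    hGs.toOpenPartialHomeomorph_coe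
  have hgrad : ∀ j, fderiv ℝ F p (Pi.single j 1) = if j = Fin.last (n + 1) then -ε else 0 := by
    intro j
    have h1 : fderiv ℝ F p (Pi.single j 1) = G p j := rfl
    rw [h1, hp3]
    show (-ε) * e j = _
    rw [he, ← hll, Pi.single_apply]
    split_ifs <;> ring
  -- sign analysis
  have hslopeval : slope h 0 ε = h ε / ε := by
    rw [slope_def_field, hzero, sub_zero, sub_zero]
  have hx : |h ε / ε - c| < |c| := by rwa [hslopeval] at hp4
  have hsgn : h ε ≠ 0 ∧ Real.sign (h ε) = Real.sign c :=
    slope_sign_helper hε1 hc0 hx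
  have hhp : h ε = p (Fin.last (n + 1)) := rfl
  refine ⟨p, ⟨⟨hp2, hpsrc⟩, hgrad⟩, ?_, ?_, ?_⟩
  · intro q hqV hq
    have hGq : G q = (-ε) • e := by
      funext j
      have h1 : G q j = fderiv ℝ F q (Pi.single j 1) := rfl
      rw [h1, hq j]
      show _ = (-ε) * e j
      rw [he, Pi.single_apply]
      split_ifs <;> ring
    apply φ.injOn hqV.2 hpsrc
    rw [hφcoe, hGq, hp3]
  · rw [← hhp]; exact hsgn.1
  · rw [← hhp, hsgn.2, hsign]
end
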